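/- For p odd and λ ∈ ℤ_p a unit, the multiplication map x ↦ λx is topologically transitive on the unit sphere {x ∈ ℚ_p : |x| = 1} if and only if λ reduces to a generator of the group of units (ℤ/p²ℤ)*. -/

import Mathlib

lemma one_add_pow_aux {R : Type*} [CommRing R] (t : R) (i : ℕ) :
    ∃ c : R, (1 + t) ^ i = 1 + i * t + t ^ 2 * c := by
  induction i with
  | zero => exact ⟨0, by ring⟩
  | succ n ih =>
    obtain ⟨c, hc⟩ := ih
    exact ⟨c + n + c * t, by rw [pow_succ, hc]; push_cast; ring⟩

lemma geom_sum_aux {R : Type*} [CommRing R] (t : R) (n : ℕ) :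
    ∃ C : R, ∑ i ∈ Finset.range n, (1 + t) ^ i
      = n + (∑ i ∈ Finset.range n, (i : R)) * t + t ^ 2 * C := by
  induction n with
  | zero => exact ⟨0, by simp⟩
  | succ n ih =>
    obtain ⟨C, hC⟩ := ih
    obtain ⟨c, hc⟩ := one_add_pow_aux t n
    refine ⟨C + c, ?_⟩
    rw [Finset.sum_range_succ, Finset.sum_range_succ, hC, hc]
    push_cast; ring

lemma sum_range_odd (m : ℕ) : ∑ i ∈ Finset.range (2 * m + 1), i = m * (2 * m + 1) := by
  have h := Finset.sum_range_id_mul_two (2 * m + 1)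
  refine Nat.eq_of_mul_eq_mul_right two_pos ?_
  rw [h, Nat.add_sub_cancel]; ring

lemma step_norm (p : ℕ) [Fact p.Prime] (hodd : Odd p) (x : ℤ_[p]) (k : ℕ) (hk : 1 ≤ k)
    (h : ‖x - 1‖ = (p:ℝ) ^ (-(k:ℤ))) : ‖x ^ p - 1‖ = (p:ℝ) ^ (-(k + 1 :ℤ)) := by
  have hp1 : (1:ℝ) < p := by exact_mod_cast (Fact.out : p.Prime).one_lt
  have hp0 : (0:ℝ) < p := lt_trans one_pos hp1
  obtain ⟨m, hm⟩ := hodd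
  set t := x - 1 with ht
  obtain ⟨C, hC⟩ := geom_sum_aux t p
  have hs : (∑ i ∈ Finset.range p, (i : ℤ_[p])) = ((m * p : ℕ) : ℤ_[p]) := by
    rw [← Nat.cast_sum]
    congr 1
    rw [hm]
    simpa using sum_range_odd m
  have hxt : x = 1 + t := by ring
  have hsum : ∑ i ∈ Finset.range p, x ^ i
      = (p : ℤ_[p]) + (((m * p : ℕ) : ℤ_[p]) * t + t ^ 2 * C) := by
    rw [hxt]
    rw [hC, hs]; ring
  have htn : ‖t‖ = (p:ℝ) ^ (-(k:ℤ)) := h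
  have hnp : ‖(p:ℤ_[p])‖ = (p:ℝ) ^ (-1:ℤ) := by
    rw [PadicInt.norm_p, zpow_neg_one]
  have hmul : ∀ a b : ℤ_[p], ‖a * b‖ = ‖a‖ * ‖b‖ := norm_mul
  have h1 : ‖((m * p : ℕ) : ℤ_[p]) * t‖ ≤ (p:ℝ) ^ (-(k+1):ℤ) := by
    rw [hmul, htn]
    have hmp : ‖((m * p : ℕ) : ℤ_[p])‖ ≤ (p:ℝ) ^ (-1:ℤ) := by
      push_cast
      rw [hmul, ← hnp]
      calc ‖(m:ℤ_[p])‖ * ‖(p:ℤ_[p])‖ ≤ 1 * ‖(p:ℤ_[p])‖ :=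
            mul_le_mul_of_nonneg_right (PadicInt.norm_le_one _) (norm_nonneg _)
        _ = ‖(p:ℤ_[p])‖ := one_mul _
    calc ‖((m * p : ℕ) : ℤ_[p])‖ * (p:ℝ) ^ (-(k:ℤ))
        ≤ (p:ℝ) ^ (-1:ℤ) * (p:ℝ) ^ (-(k:ℤ)) :=
          mul_le_mul_of_nonneg_right hmp (zpow_nonneg hp0.le _)
      _ = (p:ℝ) ^ (-(k+1):ℤ) := by rw [← zpow_add₀ hp0.ne']; ring_nf
  have h2 : ‖t ^ 2 * C‖ ≤ (p:ℝ) ^ (-(k+1):ℤ) := by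
    rw [hmul, pow_two, hmul, htn]
    calc (p:ℝ) ^ (-(k:ℤ)) * (p:ℝ) ^ (-(k:ℤ)) * ‖C‖
        ≤ (p:ℝ) ^ (-(k:ℤ)) * (p:ℝ) ^ (-(k:ℤ)) * 1 :=
          mul_le_mul_of_nonneg_left (PadicInt.norm_le_one _)
            (mul_nonneg (zpow_nonneg hp0.le _) (zpow_nonneg hp0.le _))
      _ = (p:ℝ) ^ (-(2*k:ℤ)) := by rw [mul_one, ← zpow_add₀ hp0.ne']; ring_nf
      _ ≤ (p:ℝ) ^ (-(k+1):ℤ) := by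
          apply zpow_le_zpow_right₀ hp1.le; omega
  have hrest : ‖((m * p : ℕ) : ℤ_[p]) * t + t ^ 2 * C‖ ≤ (p:ℝ) ^ (-(k+1):ℤ) :=
    le_trans (PadicInt.nonarchimedean _ _) (max_le h1 h2)
  have hlt : (p:ℝ) ^ (-(k+1):ℤ) < (p:ℝ) ^ (-1:ℤ) := by
    apply zpow_lt_zpow_right₀ hp1; omega
  have hsumnorm : ‖∑ i ∈ Finset.range p, x ^ i‖ = (p:ℝ) ^ (-1:ℤ) := by
    rw [hsum, PadicInt.norm_add_eq_max_of_ne, hnp]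
    · exact max_eq_left (le_trans hrest hlt.le)
    · rw [hnp]; exact ne_of_gt (lt_of_le_of_lt hrest hlt)
  have hfac : x ^ p - 1 = (∑ i ∈ Finset.range p, x ^ i) * (x - 1) := (geom_sum_mul x p).symm
  rw [hfac, hmul, hsumnorm, ← ht, htn, ← zpow_add₀ hp0.ne']
  ring_nf

lemma norm_exact (p : ℕ) [Fact p.Prime] (z : ℤ_[p]) (k : ℕ)
    (h1 : ‖z‖ ≤ (p:ℝ) ^ (-(k:ℤ))) (h2 : ¬ ‖z‖ ≤ (p:ℝ) ^ (-(k:ℤ) - 1)) :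
    ‖z‖ = (p:ℝ) ^ (-(k:ℤ)) := by
  have hp1 : (1:ℝ) < p := by exact_mod_cast (Fact.out : p.Prime).one_lt
  have hz : z ≠ 0 := by
    rintro rfl
    exact h2 (by rw [norm_zero]; positivity)
  rw [PadicInt.norm_eq_zpow_neg_valuation hz] at h1 h2 ⊢
  have a1 : -z.valuation ≤ -(k:ℤ) := (zpow_le_zpow_iff_right₀ hp1).mp h1
  have a2 : ¬ (-z.valuation ≤ -(k:ℤ) - 1) := fun h => h2 ((zpow_le_zpow_iff_right₀ hp1).mpr h)
  congr 1
  omega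

lemma toZModPow_eq_one_iff (p : ℕ) [Fact p.Prime] (k : ℕ) (z : ℤ_[p]) :
    PadicInt.toZModPow k z = 1 ↔ ‖z - 1‖ ≤ (p:ℝ) ^ (-(k:ℤ)) := by
  rw [PadicInt.norm_le_pow_iff_mem_span_pow, ← PadicInt.ker_toZModPow, RingHom.mem_ker,
    map_sub, map_one, sub_eq_zero]

lemma toZModPow_eq_iff_norm (p : ℕ) [Fact p.Prime] (k : ℕ) (a b : ℤ_[p]) :
    PadicInt.toZModPow k a = PadicInt.toZModPow k b ↔ ‖a - b‖ ≤ (p:ℝ) ^ (-(k:ℤ)) := by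
  rw [PadicInt.norm_le_pow_iff_mem_span_pow, ← PadicInt.ker_toZModPow, RingHom.mem_ker,
    map_sub, sub_eq_zero]

lemma units_map_val (p : ℕ) [Fact p.Prime] (k : ℕ) (lam : ℤ_[p]) (hl : IsUnit lam) :
    ((Units.map (PadicInt.toZModPow k).toMonoidHom hl.unit : (ZMod (p^k))ˣ) : ZMod (p^k))
      = PadicInt.toZModPow k lam := by
  rw [Units.coe_map]
  simp [hl.unit_spec]

lemma base_norm (p : ℕ) [Fact p.Prime] (lam : ℤ_[p]) (hl : IsUnit lam)
    (hgen : ∀ u : (ZMod (p ^ 2))ˣ,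
        u ∈ Subgroup.zpowers (Units.map (PadicInt.toZModPow 2).toMonoidHom hl.unit)) :
    ‖lam ^ (p - 1) - 1‖ = (p:ℝ) ^ (-(1:ℤ)) := by
  have hp2 : 2 ≤ p := (Fact.out : p.Prime).two_le
  haveI h1 : NeZero (p ^ 1) := ⟨pow_ne_zero _ (Fact.out : p.Prime).ne_zero⟩
  haveI h2 : NeZero (p ^ 2) := ⟨pow_ne_zero _ (Fact.out : p.Prime).ne_zero⟩
  set L2 := Units.map (PadicInt.toZModPow 2).toMonoidHom hl.unit with hL2
  -- upper bound : lam ^ (p-1) = 1 in ZMod (p^1)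
  have hup : PadicInt.toZModPow 1 (lam ^ (p - 1)) = 1 := by
    have h := ZMod.pow_totient (Units.map (PadicInt.toZModPow 1).toMonoidHom hl.unit)
    have ht : (p ^ 1).totient = p - 1 := by
      rw [Nat.totient_prime_pow (Fact.out : p.Prime) one_pos]; simp
    rw [ht] at h
    have := congrArg Units.val h
    rw [Units.val_pow_eq_pow_val, units_map_val, Units.val_one] at this
    rw [map_pow]
    exact this
  have hle : ‖lam ^ (p - 1) - 1‖ ≤ (p:ℝ) ^ (-(1:ℤ)) := by
    have := (toZModPow_eq_one_iff p 1 _).mp hup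
    simpa using this
  -- order of L2
  have hcard : orderOf L2 = p * (p - 1) := by
    rw [orderOf_eq_card_of_forall_mem_zpowers hgen, Nat.card_eq_fintype_card,
      ZMod.card_units_eq_totient, Nat.totient_prime_pow (Fact.out : p.Prime) two_pos]
    norm_num
  have hnot : ¬ ‖lam ^ (p - 1) - 1‖ ≤ (p:ℝ) ^ (-(1:ℤ) - 1) := by
    intro hc
    have hone : PadicInt.toZModPow 2 (lam ^ (p - 1)) = 1 := by
      rw [toZModPow_eq_one_iff]
      convert hc using 2; norm_num
    have hL : L2 ^ (p - 1) = 1 := by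
      ext
      rw [Units.val_pow_eq_pow_val, units_map_val, Units.val_one, ← map_pow]
      exact hone
    have hdvd := orderOf_dvd_of_pow_eq_one hL
    rw [hcard] at hdvd
    have hle' := Nat.le_of_dvd (by omega) hdvd
    have : 2 * (p - 1) ≤ p * (p - 1) := Nat.mul_le_mul_right _ hp2
    omega
  have := norm_exact p (lam ^ (p - 1) - 1) 1 (by simpa using hle) (by simpa using hnot)
  simpa using this

lemma norm_lam_pow (p : ℕ) [Fact p.Prime] (hodd : Odd p) (lam : ℤ_[p])
    (hbase : ‖lam ^ (p - 1) - 1‖ = (p:ℝ) ^ (-(1:ℤ))) (j : ℕ) :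
    ‖lam ^ (p ^ j * (p - 1)) - 1‖ = (p:ℝ) ^ (-(j + 1 :ℤ)) := by
  induction j with
  | zero => simpa using hbase
  | succ n ih =>
    have hstep := step_norm p hodd (lam ^ (p ^ n * (p - 1))) (n + 1) (by omega)
      (by rw [ih]; norm_num)
    rw [← pow_mul] at hstep
    have he : p ^ n * (p - 1) * p = p ^ (n + 1) * (p - 1) := by ring
    rw [he] at hstep
    rw [hstep]

lemma order_high (p : ℕ) [Fact p.Prime] (hodd : Odd p) (lam : ℤ_[p]) (hl : IsUnit lam)
    (hgen : ∀ u : (ZMod (p ^ 2))ˣ,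
        u ∈ Subgroup.zpowers (Units.map (PadicInt.toZModPow 2).toMonoidHom hl.unit)) (j : ℕ) :
    orderOf (Units.map (PadicInt.toZModPow (j + 2)).toMonoidHom hl.unit) = p ^ (j + 1) * (p - 1) := by
  have hp2 : 2 ≤ p := (Fact.out : p.Prime).two_le
  haveI h2 : NeZero (p ^ 2) := ⟨pow_ne_zero _ (Fact.out : p.Prime).ne_zero⟩
  haveI hj2 : NeZero (p ^ (j + 2)) := ⟨pow_ne_zero _ (Fact.out : p.Prime).ne_zero⟩
  set L := Units.map (PadicInt.toZModPow (j + 2)).toMonoidHom hl.unit with hLdef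
  have hcard : Nat.card (ZMod (p ^ (j + 2)))ˣ = p ^ (j + 1) * (p - 1) := by
    rw [Nat.card_eq_fintype_card, ZMod.card_units_eq_totient,
      Nat.totient_prime_pow (Fact.out : p.Prime) (by omega)]
    congr 2
  have hdvd : orderOf L ∣ p ^ (j + 1) * (p - 1) := by
    rw [← hcard, Nat.card_eq_fintype_card]
    exact orderOf_dvd_card
  -- the image of L at level 2
  have hd1 : p * (p - 1) ∣ orderOf L := by
    let F : (ZMod (p ^ (j + 2)))ˣ →* (ZMod (p ^ 2))ˣ :=
      Units.map (ZMod.castHom (pow_dvd_pow p (Nat.le_add_left 2 j)) (ZMod (p ^ 2))).toMonoidHom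
    have hFL : F L = Units.map (PadicInt.toZModPow 2).toMonoidHom hl.unit := by
      ext
      show (ZMod.castHom (pow_dvd_pow p (Nat.le_add_left 2 j)) (ZMod (p ^ 2)))
          ((L : ZMod (p ^ (j + 2)))) = _
      rw [units_map_val, units_map_val, ZMod.castHom_apply]
      exact PadicInt.cast_toZModPow 2 (j + 2) (by omega) lam
    have horder2 : orderOf (Units.map (PadicInt.toZModPow 2).toMonoidHom hl.unit)
        = p * (p - 1) := by
      rw [orderOf_eq_card_of_forall_mem_zpowers hgen, Nat.card_eq_fintype_card,
        ZMod.card_units_eq_totient, Nat.totient_prime_pow (Fact.out : p.Prime) two_pos]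
      norm_num
    calc p * (p - 1) = orderOf (F L) := by rw [hFL, horder2]
      _ ∣ orderOf L := orderOf_map_dvd F L
  have hnd : ¬ orderOf L ∣ p ^ j * (p - 1) := by
    intro hdv
    have hL1 : L ^ (p ^ j * (p - 1)) = 1 := orderOf_dvd_iff_pow_eq_one.mp hdv
    have hone : PadicInt.toZModPow (j + 2) (lam ^ (p ^ j * (p - 1))) = 1 := by
      have := congrArg Units.val hL1
      rw [Units.val_pow_eq_pow_val, units_map_val, Units.val_one] at this
      rw [map_pow]
      exact this
    have hle := (toZModPow_eq_one_iff p (j + 2) _).mp hone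
    have heq := norm_lam_pow p hodd lam (base_norm p lam hl hgen) j
    rw [heq] at hle
    have hp1 : (1:ℝ) < p := by exact_mod_cast (Fact.out : p.Prime).one_lt
    have := (zpow_le_zpow_iff_right₀ hp1).mp hle
    omega
  obtain ⟨e, he⟩ : (p - 1 : ℕ) ∣ orderOf L := dvd_trans (dvd_mul_left _ _) hd1
  have hee : e ∣ p ^ (j + 1) := by
    have he2 : (p - 1) * e ∣ (p - 1) * p ^ (j + 1) := by
      rw [← he, mul_comm (p - 1) (p ^ (j + 1))]
      exact hdvd
    exact (mul_dvd_mul_iff_left (show (p - 1 : ℕ) ≠ 0 by omega)).mp he2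
  obtain ⟨a, ha, rfl⟩ := (Nat.dvd_prime_pow (Fact.out : p.Prime)).mp hee
  have haj : a = j + 1 := by
    by_contra hne
    apply hnd
    rw [he]
    have : (p : ℕ) ^ a ∣ p ^ j := pow_dvd_pow p (by omega)
    calc (p - 1) * p ^ a ∣ (p - 1) * p ^ j := mul_dvd_mul_left _ this
      _ = p ^ j * (p - 1) := mul_comm _ _
  rw [he, haj, mul_comm]

lemma surj_high (p : ℕ) [Fact p.Prime] (hodd : Odd p) (lam : ℤ_[p]) (hl : IsUnit lam)
    (hgen : ∀ u : (ZMod (p ^ 2))ˣ,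
        u ∈ Subgroup.zpowers (Units.map (PadicInt.toZModPow 2).toMonoidHom hl.unit)) (j : ℕ)
    (u : (ZMod (p ^ (j + 2)))ˣ) :
    ∃ n : ℕ, (Units.map (PadicInt.toZModPow (j + 2)).toMonoidHom hl.unit) ^ n = u := by
  haveI hj2 : NeZero (p ^ (j + 2)) := ⟨pow_ne_zero _ (Fact.out : p.Prime).ne_zero⟩
  set L := Units.map (PadicInt.toZModPow (j + 2)).toMonoidHom hl.unit with hLdef
  have htop : Subgroup.zpowers L = ⊤ := by
    apply Subgroup.eq_top_of_card_eq
    rw [Nat.card_zpowers, order_high p hodd lam hl hgen j, Nat.card_eq_fintype_card,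
      ZMod.card_units_eq_totient, Nat.totient_prime_pow (Fact.out : p.Prime) (by omega)]
    congr 2
  have hu : u ∈ Subgroup.zpowers L := htop ▸ Subgroup.mem_top u
  rw [← mem_powers_iff_mem_zpowers, Submonoid.mem_powers_iff] at hu
  exact hu

lemma exists_unit_lift (p : ℕ) [Fact p.Prime] (v : (ZMod (p ^ 2))ˣ) :
    ∃ y : ℤ_[p], IsUnit y ∧ PadicInt.toZModPow 2 y = (v : ZMod (p ^ 2)) := by
  have hp2 : 2 ≤ p := (Fact.out : p.Prime).two_le
  haveI h2 : NeZero (p ^ 2) := ⟨pow_ne_zero _ (Fact.out : p.Prime).ne_zero⟩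
  haveI hlt : Fact (1 < p ^ 2) := ⟨Nat.one_lt_pow (by norm_num) (by omega)⟩
  set y : ℤ_[p] := (((v : ZMod (p ^ 2)).val : ℕ) : ℤ_[p]) with hy
  have hmap : PadicInt.toZModPow 2 y = (v : ZMod (p ^ 2)) := by
    rw [hy, map_natCast, ZMod.natCast_val, ZMod.cast_id]
  refine ⟨y, ?_, hmap⟩
  rw [PadicInt.isUnit_iff]
  by_contra hne
  have hlt1 : ‖y‖ < 1 := lt_of_le_of_ne (PadicInt.norm_le_one y) hne
  obtain ⟨w, hw⟩ := (PadicInt.norm_lt_one_iff_dvd y).mp hlt1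
  have hvu : IsUnit ((p : ZMod (p ^ 2)) * PadicInt.toZModPow 2 w) := by
    have : (v : ZMod (p ^ 2)) = (p : ZMod (p ^ 2)) * PadicInt.toZModPow 2 w := by
      rw [← hmap, hw, map_mul, map_natCast]
    rw [← this]
    exact v.isUnit
  obtain ⟨U, hU⟩ := hvu
  have h1 : ((p : ZMod (p ^ 2)) * PadicInt.toZModPow 2 w) * (↑U⁻¹ : ZMod (p ^ 2)) = 1 := by
    rw [← hU, ← Units.val_mul, mul_inv_cancel, Units.val_one]
  have hps : ((p : ZMod (p ^ 2))) ^ 2 = 0 := by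
    rw [← Nat.cast_pow, ZMod.natCast_self]
  have hzero : (1 : ZMod (p ^ 2)) = 0 := by
    have h12 := congrArg (· ^ 2) h1
    simp only [one_pow] at h12
    calc (1 : ZMod (p ^ 2)) = (((p : ZMod (p ^ 2)) * PadicInt.toZModPow 2 w)
          * (↑U⁻¹ : ZMod (p ^ 2))) ^ 2 := h12.symm
      _ = ((p : ZMod (p ^ 2))) ^ 2
          * (PadicInt.toZModPow 2 w * (↑U⁻¹ : ZMod (p ^ 2))) ^ 2 := by ring
      _ = 0 := by rw [hps, zero_mul]
  exact one_ne_zero hzero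

/-- For `p` odd and a unit `λ ∈ ℤ_p`, the map `x ↦ λx` is topologically transitive on the
unit sphere of `ℚ_p` if and only if the reduction of `λ` generates `(ℤ/p²ℤ)ˣ`. -/
theorem mul_map_transitive_iff_generator (p : ℕ) [Fact p.Prime] (hodd : Odd p)
    (lam : ℤ_[p]) (hl : IsUnit lam) :
    (∃ x : ℚ_[p], ‖x‖ = 1 ∧
        {y : ℚ_[p] | ‖y‖ = 1} ⊆ closure {z : ℚ_[p] | ∃ n : ℕ, z = (lam : ℚ_[p]) ^ n * x}) ↔
      ∀ u : (ZMod (p ^ 2))ˣ,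
        u ∈ Subgroup.zpowers (Units.map (PadicInt.toZModPow 2).toMonoidHom hl.unit) := by
  have hp2 : 2 ≤ p := (Fact.out : p.Prime).two_le
  have hp1R : (1:ℝ) < p := by exact_mod_cast (Fact.out : p.Prime).one_lt
  have hp0R : (0:ℝ) < p := lt_trans one_pos hp1R
  haveI h2 : NeZero (p ^ 2) := ⟨pow_ne_zero _ (Fact.out : p.Prime).ne_zero⟩
  constructor
  · rintro ⟨x, hx1, hxd⟩ u
    set x' : ℤ_[p] := ⟨x, hx1.le⟩ with hx'
    have hx'n : ‖x'‖ = 1 := by rw [PadicInt.norm_def]; exact hx1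
    have hxu : IsUnit x' := PadicInt.isUnit_iff.mpr hx'n
    set X := Units.map (PadicInt.toZModPow 2).toMonoidHom hxu.unit with hX
    obtain ⟨y, hyu, hy2⟩ := exists_unit_lift p (u * X)
    have hyn : ‖(y : ℚ_[p])‖ = 1 := by
      rw [← PadicInt.norm_def]; exact PadicInt.isUnit_iff.mp hyu
    have hmem := hxd hyn
    rw [Metric.mem_closure_iff] at hmem
    obtain ⟨z, hz, hdist⟩ := hmem ((p:ℝ) ^ (-(2:ℤ))) (by positivity)
    obtain ⟨n, rfl⟩ := hz
    have hnorm : ‖y - lam ^ n * x'‖ ≤ (p:ℝ) ^ (-(2:ℤ)) := by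
      rw [PadicInt.norm_def]
      push_cast
      rw [← dist_eq_norm]
      exact le_of_lt hdist
    have heq : PadicInt.toZModPow 2 y = PadicInt.toZModPow 2 (lam ^ n * x') := by
      rw [toZModPow_eq_iff_norm]
      exact_mod_cast hnorm
    set L2 := Units.map (PadicInt.toZModPow 2).toMonoidHom hl.unit with hL2
    have hval : ((u * X : (ZMod (p^2))ˣ) : ZMod (p^2)) = ((L2 ^ n * X : (ZMod (p^2))ˣ) : ZMod (p^2)) := by
      rw [← hy2, heq, map_mul, map_pow]
      rw [Units.val_mul, Units.val_pow_eq_pow_val, units_map_val, units_map_val]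
    have huX : u * X = L2 ^ n * X := Units.ext hval
    have hu : u = L2 ^ n := mul_right_cancel huX
    rw [Subgroup.mem_zpowers_iff]
    exact ⟨(n : ℤ), by rw [zpow_natCast, hu]⟩
  · intro hgen
    refine ⟨(1 : ℚ_[p]), norm_one, ?_⟩
    intro y hy
    rw [Metric.mem_closure_iff]
    intro ε hε
    obtain ⟨k, hk⟩ := exists_pow_lt_of_lt_one hε
      (show (p:ℝ)⁻¹ < 1 by rw [inv_lt_one_iff₀]; right; exact hp1R)
    have hky : (p:ℝ) ^ (-(k:ℤ)) < ε := by
      rw [zpow_neg, zpow_natCast, ← inv_pow]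
      exact hk
    set y' : ℤ_[p] := ⟨y, le_of_eq hy⟩ with hy'
    have hyu : IsUnit y' := PadicInt.isUnit_iff.mpr (by rw [PadicInt.norm_def]; exact hy)
    obtain ⟨n, hn⟩ := surj_high p hodd lam hl hgen k
      (Units.map (PadicInt.toZModPow (k+2)).toMonoidHom hyu.unit)
    refine ⟨(lam : ℚ_[p]) ^ n * 1, ⟨n, rfl⟩, ?_⟩
    have hval := congrArg Units.val hn
    rw [Units.val_pow_eq_pow_val, units_map_val, units_map_val] at hval
    have hEq : PadicInt.toZModPow (k+2) (lam ^ n) = PadicInt.toZModPow (k+2) y' := by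
      rw [map_pow]; exact hval
    have hnorm := (toZModPow_eq_iff_norm p (k+2) _ _).mp hEq
    rw [dist_eq_norm]
    have hco : y - (lam : ℚ_[p]) ^ n * 1 = ((y' - lam ^ n : ℤ_[p]) : ℚ_[p]) := by
      push_cast
      ring
    calc ‖y - (lam : ℚ_[p]) ^ n * 1‖ = ‖(y' - lam ^ n : ℤ_[p])‖ := by
          rw [hco, ← PadicInt.norm_def]
      _ = ‖lam ^ n - y'‖ := by rw [norm_sub_rev]
      _ ≤ (p:ℝ) ^ (-((k+2:ℕ):ℤ)) := hnorm
      _ ≤ (p:ℝ) ^ (-(k:ℤ)) := by apply zpow_le_zpow_right₀ hp1R.le; push_cast; omega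
      _ < ε := hky
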